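/- The number of pairs of strictly increasing integer sequences (a₁ < … < a_k, b₁ < … < b_k), over all 0 ≤ k ≤ n, with 1 ≤ a_t for all t, b_k ≤ n+1, and a_t < b_t for all t, equals the Catalan number C_{n+1} = (1/(n+2))·binom(2n+2, n+1). -/

import Mathlib

/-- `IIn n` : increasing couples of increasing integer sequences bounded by `1` and `n+1`:
pairs of strictly increasing lists `(a₁ < … < a_k, b₁ < … < b_k)` of equal length `k ≤ n`,
with `1 ≤ aₜ`, all `bₜ ≤ n+1`, and `aₜ < bₜ` componentwise. -/
def IIn (n : ℕ) : Set (List ℕ × List ℕ) :=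
  {p | p.1.length = p.2.length ∧ p.1.length ≤ n ∧
    p.1.Chain' (· < ·) ∧ p.2.Chain' (· < ·) ∧
    (∀ x ∈ p.1, 1 ≤ x) ∧ (∀ y ∈ p.2, y ≤ n + 1) ∧
    ∀ (t : ℕ) (h1 : t < p.1.length) (h2 : t < p.2.length), p.1[t] < p.2[t]}

open List DyckStep

namespace Stmt11

/-- Build the Dyck word from a pair of sequences. -/
def toW (n : ℕ) : List ℕ → List ℕ → ℕ → ℕ → List DyckStep
  | a :: as, b :: bs, ap, bp =>
      replicate (b - bp) U ++ replicate (a - ap) D ++ toW n as bs a b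
  | _, _, ap, bp => replicate (n + 2 - bp) U ++ replicate (n + 1 - ap) D

/-- Recover the pair of sequences (valley coordinates) from a word. -/
def inv : List DyckStep → ℕ → ℕ → List ℕ × List ℕ
  | [], _, _ => ([], [])
  | U :: l, cu, cd => inv l (cu + 1) cd
  | D :: l, cu, cd =>
      if l.head? = some U then
        ((cd + 1) :: (inv l cu (cd + 1)).1, (cu + 1) :: (inv l cu (cd + 1)).2)
      else inv l cu (cd + 1)

lemma toW_nil_left (n : ℕ) (bs : List ℕ) (ap bp : ℕ) :
    toW n [] bs ap bp = replicate (n + 2 - bp) U ++ replicate (n + 1 - ap) D := by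
  cases bs <;> rfl

lemma toW_nil_right (n : ℕ) (a : ℕ) (as : List ℕ) (ap bp : ℕ) :
    toW n (a :: as) [] ap bp = replicate (n + 2 - bp) U ++ replicate (n + 1 - ap) D := rfl

lemma toW_cons (n : ℕ) (a b : ℕ) (as bs : List ℕ) (ap bp : ℕ) :
    toW n (a :: as) (b :: bs) ap bp
      = replicate (b - bp) U ++ replicate (a - ap) D ++ toW n as bs a b := rfl

lemma invA (m : ℕ) (l : List DyckStep) (cu cd : ℕ) :
    inv (replicate m U ++ l) cu cd = inv l (cu + m) cd := by
  induction m generalizing cu with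
  | zero => simp
  | succ m ih =>
      rw [replicate_succ, cons_append]
      show inv _ (cu+1) cd = _
      rw [ih]; ring_nf

lemma invB0 (m : ℕ) (cu cd : ℕ) : inv (replicate m D) cu cd = ([], []) := by
  induction m generalizing cd with
  | zero => rfl
  | succ m ih =>
      rw [replicate_succ]
      show (if (replicate m D).head? = some U then _ else _) = _
      have : (replicate m D).head? ≠ some U := by cases m <;> simp [replicate_succ]
      rw [if_neg this, ih]

lemma invB (m : ℕ) (hm : 1 ≤ m) (l : List DyckStep) (hl : l.head? = some U) (cu cd : ℕ) :
    inv (replicate m D ++ l) cu cd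
      = ((cd + m) :: (inv l cu (cd + m)).1, (cu + 1) :: (inv l cu (cd + m)).2) := by
  induction m generalizing cd with
  | zero => omega
  | succ m ih =>
      rw [replicate_succ, cons_append]
      match m with
      | 0 =>
          simp only [replicate_zero, nil_append]
          show (if l.head? = some U then _ else _) = _
          rw [if_pos hl]
      | m + 1 =>
          have hm' : 1 ≤ m + 1 := by omega
          show (if (replicate (m+1) D ++ l).head? = some U then _ else _) = _
          rw [show (replicate (m+1) D ++ l).head? = some D by simp [replicate_succ],
            if_neg (by simp), ih hm']
          have e : cd + 1 + (m + 1) = cd + (m + 1 + 1) := by omega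
          rw [e]


lemma listStrongInd {α} {P : List α → Prop}
    (h : ∀ w, (∀ w', w'.length < w.length → P w') → P w) : ∀ w, P w :=
  fun w => h w (fun w' _ => listStrongInd h w')
termination_by w => w.length
decreasing_by assumption

lemma chain_weaken {x y : ℕ} {l : List ℕ} (h : y ≤ x) (hc : List.Chain (· < ·) x l) :
    List.Chain (· < ·) y l := by
  cases l with
  | nil => exact List.Chain.nil
  | cons a t =>
      unfold List.Chain at hc ⊢
      rw [List.chain_cons] at hc ⊢
      exact ⟨by omega, hc.2⟩

/-- Main structural properties of `inv` on words satisfying the Dyck prefix condition. -/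
lemma inv_spec : ∀ w : List DyckStep, ∀ cu cd : ℕ,
    (∀ i, cd + ((w.take i).count D) ≤ cu + ((w.take i).count U)) →
    (inv w cu cd).1.length = (inv w cu cd).2.length ∧
    List.Chain (· < ·) cd (inv w cu cd).1 ∧
    List.Chain (· < ·) cu (inv w cu cd).2 ∧
    (∀ x ∈ (inv w cu cd).2, x ≤ cu + w.count U) ∧
    (inv w cu cd).1.length ≤ w.count U ∧
    List.Forall₂ (· < ·) (inv w cu cd).1 (inv w cu cd).2 := by
  intro w
  induction w using listStrongInd with
  | h w IH => ?_
  match w with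
  | [] => intro cu cd H; simp [inv, List.Chain.nil]
  | U :: l =>
      intro cu cd H
      have H' : ∀ i, cd + ((l.take i).count D) ≤ (cu + 1) + ((l.take i).count U) := by
        intro i
        have := H (i + 1)
        simp [count_cons] at this; omega
      have h := IH l (by simp) (cu + 1) cd H'
      show _ ∧ _
      rw [show inv (U :: l) cu cd = inv l (cu + 1) cd from rfl]
      refine ⟨h.1, h.2.1, ?_, ?_, ?_, h.2.2.2.2.2⟩
      · exact chain_weaken (by omega) h.2.2.1
      · intro x hx
        have := h.2.2.2.1 x hx
        simp [count_cons]; omega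
      · have := h.2.2.2.2.1
        simp [count_cons]; omega
  | D :: l =>
      intro cu cd H
      rcases hl : l.head? with - | s
      · -- l = []
        have : l = [] := head?_eq_none_iff.mp hl
        subst this
        simp [inv, List.Chain.nil]
      rcases s.dichotomy with rfl | rfl
      · -- record case : l = U :: l'
        obtain ⟨l', rfl⟩ : ∃ l', l = U :: l' := by
          cases l with
          | nil => simp at hl
          | cons x t =>
              simp only [head?_cons, Option.some.injEq] at hl
              exact ⟨t, by rw [hl]⟩
        have hrec : inv (D :: U :: l') cu cd
            = ((cd + 1) :: (inv l' (cu + 1) (cd + 1)).1,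
               (cu + 1) :: (inv l' (cu + 1) (cd + 1)).2) := by
          show (if (U :: l').head? = some U then _ else _) = _
          rw [if_pos (by simp)]; rfl
        have H' : ∀ i, (cd + 1) + ((l'.take i).count D) ≤ (cu + 1) + ((l'.take i).count U) := by
          intro i
          have := H (i + 2)
          simp [count_cons] at this; omega
        have hcdcu : cd + 1 ≤ cu := by
          have := H 1
          simpa [count_cons] using this
        have h := IH l' (by simp) (cu + 1) (cd + 1) H'
        rw [hrec]
        refine ⟨by simp [h.1], ?_, ?_, ?_, ?_, ?_⟩
        · exact List.Chain.cons (by omega) h.2.1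
        · exact List.Chain.cons (by omega) h.2.2.1
        · intro x hx
          simp only [mem_cons] at hx
          rcases hx with rfl | hx
          · simp [count_cons]
          · have := h.2.2.2.1 x hx
            simp [count_cons]; omega
        · have := h.2.2.2.2.1
          simp [count_cons]; omega
        · exact List.Forall₂.cons (by omega) h.2.2.2.2.2
      · -- no-record case : l starts with D
        have hrec : inv (D :: l) cu cd = inv l cu (cd + 1) := by
          show (if l.head? = some U then _ else _) = _
          rw [hl, if_neg (by simp)]
        have H' : ∀ i, (cd + 1) + ((l.take i).count D) ≤ cu + ((l.take i).count U) := by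
          intro i
          have := H (i + 1)
          simp [count_cons] at this; omega
        have h := IH l (by simp) cu (cd + 1) H'
        rw [hrec]
        refine ⟨h.1, chain_weaken (by omega) h.2.1, h.2.2.1, ?_, ?_, h.2.2.2.2.2⟩
        · intro x hx
          have := h.2.2.2.1 x hx
          simp [count_cons]; omega
        · have := h.2.2.2.2.1
          simp [count_cons]; omega


lemma head?_replicate_append {m : ℕ} (hm : 1 ≤ m) (s : DyckStep) (l : List DyckStep) :
    (replicate m s ++ l).head? = some s := by
  obtain ⟨k, rfl⟩ : ∃ k, m = k + 1 := ⟨m - 1, by omega⟩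
  simp [replicate_succ]

lemma head?_toW (n : ℕ) (as bs : List ℕ) (a b : ℕ)
    (hb : List.Chain (· < ·) b bs) (hbn : b ≤ n + 1) :
    (toW n as bs a b).head? = some U := by
  match as, bs with
  | [], _ => exact head?_replicate_append (m := n + 2 - b) (by omega) U _
  | _ :: _, [] => exact head?_replicate_append (m := n + 2 - b) (by omega) U _
  | a' :: as', b' :: bs' =>
      unfold List.Chain at hb
      rw [List.chain_cons] at hb
      rw [toW_cons, append_assoc]
      exact head?_replicate_append (m := b' - b) (by omega) U _

lemma three (n : ℕ) : ∀ (a b : List ℕ) (ap bp : ℕ), a.length = b.length →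
    List.Chain (· < ·) ap a → List.Chain (· < ·) bp b → (∀ x ∈ b, x ≤ n + 1) →
    1 ≤ bp →
    inv (toW n a b ap bp) (bp - 1) ap = (a, b) := by
  intro a
  induction a with
  | nil =>
      intro b ap bp hlen _ _ _ _
      have : b = [] := by
        cases b with
        | nil => rfl
        | cons x t => simp at hlen
      subst this
      rw [toW_nil_left, invA, invB0]
  | cons a as IHa =>
      intro b ap bp hlen ha hb hbn hbp
      cases b with
      | nil => simp at hlen
      | cons b bs =>
          unfold List.Chain at ha hb
          rw [List.chain_cons] at ha hb
          have hb1 : b ≤ n + 1 := hbn b (by simp)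
          rw [toW_cons, append_assoc, invA, invB (a - ap) (by omega) _ (head?_toW n as bs a b hb.2 hb1)]
          have e1 : ap + (a - ap) = a := by omega
          have e2 : bp - 1 + (b - bp) = b - 1 := by omega
          have e3 : b - 1 + 1 = b := by omega
          rw [e1, e2, e3]
          have := IHa bs a b (by simpa using hlen) ha.2 hb.2
            (fun x hx => hbn x (mem_cons_of_mem _ hx)) (by omega)
          rw [this]


lemma decomp (w : List DyckStep) (hw : w.head? = some U) :
    ∃ α β w', 1 ≤ α ∧ w = replicate α U ++ replicate β D ++ w' ∧
      (w' = [] ∨ (1 ≤ β ∧ w'.head? = some U)) := by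
  classical
  set p : DyckStep → Bool := fun s => decide (s = U) with hp
  set q : DyckStep → Bool := fun s => decide (s = D) with hq
  set dw := w.dropWhile p with hdw
  set w' := dw.dropWhile q with hw'
  refine ⟨(w.takeWhile p).length, (dw.takeWhile q).length, w', ?_, ?_, ?_⟩
  · obtain ⟨t, rfl⟩ : ∃ t, w = U :: t := by
      cases w with
      | nil => simp at hw
      | cons x t => exact ⟨t, by simp at hw; rw [hw]⟩
    rw [takeWhile_cons]
    simp [hp]
  · have h1 : w.takeWhile p = replicate (w.takeWhile p).length U := by
      rw [eq_replicate_iff]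
      exact ⟨rfl, fun b hb => by have := mem_takeWhile_imp hb; simpa [hp] using this⟩
    have h2 : dw.takeWhile q = replicate (dw.takeWhile q).length D := by
      rw [eq_replicate_iff]
      exact ⟨rfl, fun b hb => by have := mem_takeWhile_imp hb; simpa [hq] using this⟩
    conv_lhs => rw [← takeWhile_append_dropWhile (p := p) (l := w), ← hdw,
      ← takeWhile_append_dropWhile (p := q) (l := dw), ← hw']
    rw [← h1, ← h2, append_assoc]
  · rcases eq_or_ne w' [] with h | h
    · exact Or.inl h
    · refine Or.inr ⟨?_, ?_⟩
      · by_contra hβ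
        have hβ0 : (dw.takeWhile q).length = 0 := by omega
        have : dw.takeWhile q = [] := by
          rwa [length_eq_zero_iff] at hβ0
        have hdweq : dw = w' := by
          conv_lhs => rw [← takeWhile_append_dropWhile (p := q) (l := dw)]
          rw [this, nil_append, hw']
        -- head of dw fails p, head of w' should fail q too; derive contradiction
        have h3 := head?_dropWhile_not p w
        have h4 := head?_dropWhile_not q dw
        rw [← hdw] at h3
        rw [← hw'] at h4
        cases hh : w'.head? with
        | none => exact h (head?_eq_none_iff.mp hh)
        | some s =>
            rw [hdweq, hh] at h3
            rw [hh] at h4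
            simp only at h3 h4
            rcases s.dichotomy with rfl | rfl
            · simp [hp] at h3
            · simp [hq] at h4
      · have h4 := head?_dropWhile_not q dw
        rw [← hw'] at h4
        cases hh : w'.head? with
        | none => exact absurd (head?_eq_none_iff.mp hh) h
        | some s =>
            rw [hh] at h4
            simp only at h4
            rcases s.dichotomy with rfl | rfl
            · rfl
            · simp [hq] at h4

lemma four (n : ℕ) : ∀ w : List DyckStep, (w = [] ∨ w.head? = some U) →
    ∀ cu cd : ℕ, w.count U + cu = n + 1 → w.count D + cd = n + 1 →
    toW n (inv w cu cd).1 (inv w cu cd).2 cd (cu + 1) = w := by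
  intro w
  induction w using listStrongInd with
  | h w IH => ?_
  intro hw cu cd hU hD
  rcases hw with rfl | hw
  · simp only [count_nil] at hU hD
    show toW n ([], []).1 ([], []).2 cd (cu + 1) = []
    rw [show ([], []).1 = ([] : List ℕ) from rfl, show ([], []).2 = ([] : List ℕ) from rfl,
      toW_nil_left]
    have e1 : n + 2 - (cu + 1) = 0 := by omega
    have e2 : n + 1 - cd = 0 := by omega
    rw [e1, e2]; rfl
  obtain ⟨α, β, w', hα, rfl, hcase⟩ := decomp w hw
  have hcU : (replicate α U ++ replicate β D ++ w').count U = α + w'.count U := by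
    simp [count_append, count_replicate]
  have hcD : (replicate α U ++ replicate β D ++ w').count D = β + w'.count D := by
    simp [count_append, count_replicate]
  rw [hcU] at hU; rw [hcD] at hD
  rw [append_assoc, invA]
  rcases hcase with rfl | ⟨hβ, hw'⟩
  · rw [append_nil, invB0]
    rw [toW_nil_left]
    simp only [count_nil] at hU hD
    have e1 : n + 2 - (cu + 1) = α := by omega
    have e2 : n + 1 - cd = β := by omega
    rw [e1, e2]
  · rw [invB β hβ w' hw']
    rw [toW_cons]
    have e1 : cu + α + 1 - (cu + 1) = α := by omega
    have e2 : cd + β - cd = β := by omega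
    rw [e1, e2]
    have hlen : w'.length < (replicate α U ++ replicate β D ++ w').length := by
      simp [length_append]; omega
    have := IH w' hlen (Or.inr hw') (cu + α) (cd + β) (by omega) (by omega)
    rw [show cu + α + 1 = (cu + α) + 1 from rfl, this, append_assoc]


lemma count_toW_U (n : ℕ) : ∀ (a b : List ℕ) (ap bp : ℕ),
    List.Chain (· < ·) bp b → (∀ x ∈ b, x ≤ n + 1) → bp ≤ n + 2 →
    (toW n a b ap bp).count U = n + 2 - bp := by
  intro a
  induction a with
  | nil =>
      intro b ap bp _ _ hbp
      rw [toW_nil_left]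
      simp [count_append, count_replicate]
  | cons a as IHa =>
      intro b ap bp hb hbn hbp
      cases b with
      | nil =>
          rw [toW_nil_right]
          simp [count_append, count_replicate]
      | cons b bs =>
          unfold List.Chain at hb
          rw [List.chain_cons] at hb
          have hb1 : b ≤ n + 1 := hbn b (by simp)
          rw [toW_cons]
          simp only [count_append, count_replicate]
          rw [IHa bs a b hb.2 (fun x hx => hbn x (mem_cons_of_mem _ hx)) (by omega)]
          simp; omega

lemma count_toW_D (n : ℕ) : ∀ (a b : List ℕ) (ap bp : ℕ),
    List.Chain (· < ·) ap a → (∀ x ∈ a, x ≤ n + 1) → ap ≤ n + 1 →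
    (toW n a b ap bp).count D = n + 1 - ap := by
  intro a
  induction a with
  | nil =>
      intro b ap bp _ _ hap
      rw [toW_nil_left]
      simp [count_append, count_replicate]
  | cons a as IHa =>
      intro b ap bp ha han hap
      cases b with
      | nil =>
          rw [toW_nil_right]
          simp [count_append, count_replicate]
      | cons b bs =>
          unfold List.Chain at ha
          rw [List.chain_cons] at ha
          have ha1 : a ≤ n + 1 := han a (by simp)
          rw [toW_cons]
          simp only [count_append, count_replicate]
          rw [IHa bs a b ha.2 (fun x hx => han x (mem_cons_of_mem _ hx)) (by omega)]
          simp; omega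

lemma take_rep {i m : ℕ} {s : DyckStep} {X : List DyckStep} :
    take i (replicate m s ++ X) = replicate (min i m) s ++ take (i - m) X := by
  rw [take_append, take_replicate, length_replicate]

lemma prefix_toW (n : ℕ) : ∀ (a b : List ℕ) (ap bp : ℕ),
    List.Chain (· < ·) ap a → List.Chain (· < ·) bp b → (∀ x ∈ b, x ≤ n + 1) →
    List.Forall₂ (· < ·) a b → ap < bp → bp ≤ n + 2 →
    ∀ i, ap + (((toW n a b ap bp).take i).count D)
      ≤ (bp - 1) + (((toW n a b ap bp).take i).count U) := by
  intro a
  induction a with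
  | nil =>
      intro b ap bp _ _ _ hf hap hbp i
      have hb : b = [] := forall₂_nil_left_iff.mp hf
      subst hb
      rw [toW_nil_left, take_rep]
      simp only [count_append, count_replicate, take_replicate, length_replicate]
      simp
      omega
  | cons a as IHa =>
      intro b ap bp ha hb hbn hf hap hbp i
      cases b with
      | nil => cases hf
      | cons b bs =>
          unfold List.Chain at ha hb
          rw [List.chain_cons] at ha hb
          rw [forall₂_cons] at hf
          rw [toW_cons, append_assoc, take_rep, take_rep]
          simp only [count_append, count_replicate, take_replicate, length_replicate]
          have hb1 : b ≤ n + 1 := hbn b (by simp)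
          have IH := IHa bs a b ha.2 hb.2 (fun x hx => hbn x (mem_cons_of_mem _ hx))
            hf.2 hf.1 (by omega) (i - (b - bp) - (a - ap))
          have hcle : (((toW n as bs a b).take (i - (b - bp) - (a - ap))).count D)
              ≤ i - (b - bp) - (a - ap) :=
            count_le_length.trans (length_take_le _ _)
          simp at IH ⊢
          omega


def IInP (n : ℕ) : Set (List ℕ × List ℕ) :=
  {p | p.1.length = p.2.length ∧ p.1.length ≤ n ∧
    p.1.Chain' (· < ·) ∧ p.2.Chain' (· < ·) ∧
    (∀ x ∈ p.1, 1 ≤ x) ∧ (∀ y ∈ p.2, y ≤ n + 1) ∧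
    ∀ (t : ℕ) (h1 : t < p.1.length) (h2 : t < p.2.length), p.1[t] < p.2[t]}

lemma chain_chain' {x : ℕ} {l : List ℕ} (h : List.Chain (· < ·) x l) :
    l.Chain' (· < ·) := by
  cases l with
  | nil => exact List.IsChain.nil
  | cons y t =>
      unfold List.Chain at h
      rw [List.chain_cons] at h
      exact h.2

lemma chain_all {x : ℕ} {l : List ℕ} (h : List.Chain (· < ·) x l) :
    ∀ y ∈ l, x < y := by
  unfold List.Chain at h
  rw [List.isChain_iff_pairwise] at h
  exact (List.pairwise_cons.mp h).1

lemma IIn_facts (n : ℕ) {a b : List ℕ} (h : (a, b) ∈ IInP n) :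
    a.length = b.length ∧ List.Chain (· < ·) 0 a ∧ List.Chain (· < ·) 1 b ∧
    (∀ x ∈ b, x ≤ n + 1) ∧ List.Forall₂ (· < ·) a b ∧ (∀ x ∈ a, x ≤ n + 1) := by
  obtain ⟨h1, h2, h3, h4, h5, h6, h7⟩ := h
  simp only at h1 h2 h3 h4 h5 h6 h7
  have hf : List.Forall₂ (· < ·) a b := by
    rw [forall₂_iff_get]
    exact ⟨h1, fun i hi1 hi2 => by simpa using h7 i hi1 hi2⟩
  have ha : List.Chain (· < ·) 0 a := by
    unfold List.Chain
    rw [List.isChain_iff_pairwise, pairwise_cons]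
    exact ⟨fun x hx => h5 x hx, List.isChain_iff_pairwise.mp h3⟩
  have hb : List.Chain (· < ·) 1 b := by
    unfold List.Chain
    rw [List.isChain_iff_pairwise, pairwise_cons]
    refine ⟨?_, List.isChain_iff_pairwise.mp h4⟩
    intro y hy
    obtain ⟨i, hi, rfl⟩ := List.mem_iff_get.mp hy
    have hia : (i : ℕ) < a.length := by omega
    have := h7 i hia i.2
    have := h5 (a[(i : ℕ)]'hia) (List.getElem_mem _)
    simp only [List.get_eq_getElem]
    omega
  have han : ∀ x ∈ a, x ≤ n + 1 := by
    intro x hx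
    obtain ⟨i, hi, rfl⟩ := List.mem_iff_get.mp hx
    have hib : (i : ℕ) < b.length := by omega
    have := h7 i i.2 hib
    have := h6 (b[(i : ℕ)]'hib) (List.getElem_mem _)
    simp only [List.get_eq_getElem]
    omega
  exact ⟨h1, ha, hb, h6, hf, han⟩

/-- The Dyck word associated to a pair in `IInP n`. -/
def pairDyck (n : ℕ) (x : List ℕ × List ℕ) (hx : x ∈ IInP n) : DyckWord where
  toList := toW n x.1 x.2 0 1
  count_U_eq_count_D := by
    obtain ⟨a, b⟩ := x
    obtain ⟨h1, ha, hb, hbn, hf, han⟩ := IIn_facts n hx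
    simp only
    rw [count_toW_U n a b 0 1 hb hbn (by omega), count_toW_D n a b 0 1 ha han (by omega)]
    omega
  count_D_le_count_U := by
    obtain ⟨a, b⟩ := x
    obtain ⟨h1, ha, hb, hbn, hf, han⟩ := IIn_facts n hx
    intro i
    have := prefix_toW n a b 0 1 ha hb hbn hf (by omega) (by omega) i
    simpa using this

lemma pairDyck_toList (n : ℕ) (x : List ℕ × List ℕ) (hx : x ∈ IInP n) :
    (pairDyck n x hx).toList = toW n x.1 x.2 0 1 := rfl

lemma pairDyck_semilength (n : ℕ) (x : List ℕ × List ℕ) (hx : x ∈ IInP n) :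
    (pairDyck n x hx).semilength = n + 1 := by
  obtain ⟨a, b⟩ := x
  obtain ⟨h1, ha, hb, hbn, hf, han⟩ := IIn_facts n hx
  show (pairDyck n (a, b) hx).toList.count U = n + 1
  rw [pairDyck_toList]
  have := count_toW_U n a b 0 1 hb hbn (by omega)
  simpa using this

lemma dyck_head? (n : ℕ) (q : DyckWord) (hq : q.semilength = n + 1) :
    q.toList.head? = some U := by
  have hcU : q.toList.count U = n + 1 := hq
  have hne : q.toList ≠ [] := by
    intro hnil
    rw [hnil] at hcU
    simp at hcU
  rw [List.head?_eq_head hne]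
  exact congrArg some (q.head_eq_U hne)

lemma dyck_mem (n : ℕ) (q : DyckWord) (hq : q.semilength = n + 1) :
    inv q.toList 0 0 ∈ IInP n := by
  have hcU : q.toList.count U = n + 1 := hq
  have hcD : q.toList.count D = n + 1 := by rw [← q.count_U_eq_count_D]; exact hq
  have H : ∀ i, 0 + ((q.toList.take i).count D) ≤ 0 + ((q.toList.take i).count U) := by
    intro i; simpa using q.count_D_le_count_U i
  obtain ⟨h1, h2, h3, h4, h5, h6⟩ := inv_spec q.toList 0 0 H
  have hhd := dyck_head? n q hq
  obtain ⟨l, hl⟩ : ∃ l, q.toList = U :: l := by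
    cases hq2 : q.toList with
    | nil => rw [hq2] at hhd; simp at hhd
    | cons x t =>
        rw [hq2] at hhd
        simp only [head?_cons, Option.some.injEq] at hhd
        exact ⟨t, by rw [hhd]⟩
  have hlen : (inv q.toList 0 0).1.length ≤ n := by
    rw [hl]
    show (inv l 1 0).1.length ≤ n
    have H' : ∀ i, 0 + ((l.take i).count D) ≤ 1 + ((l.take i).count U) := by
      intro i
      have := H (i + 1)
      rw [hl] at this
      simp [count_cons] at this
      omega
    have := (inv_spec l 1 0 H').2.2.2.2.1
    have hcUl : l.count U = n := by
      rw [hl] at hcU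
      simp [count_cons] at hcU
      omega
    omega
  refine ⟨h1, hlen, chain_chain' h2, chain_chain' h3, ?_, ?_, ?_⟩
  · intro x hx
    have := chain_all h2 x hx
    omega
  · intro y hy
    have := h4 y hy
    omega
  · intro t ht1 ht2
    have := (forall₂_iff_get.mp h6).2 t ht1 ht2
    simpa using this

/-- The bijection. -/
def myEquiv (n : ℕ) : (IInP n) ≃ {q : DyckWord // q.semilength = n + 1} where
  toFun x := ⟨pairDyck n x.1 x.2, pairDyck_semilength n x.1 x.2⟩
  invFun q := ⟨inv q.1.toList 0 0, dyck_mem n q.1 q.2⟩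
  left_inv := by
    rintro ⟨⟨a, b⟩, hx⟩
    obtain ⟨h1, ha, hb, hbn, hf, han⟩ := IIn_facts n hx
    apply Subtype.ext
    show inv (pairDyck n (a, b) hx).toList 0 0 = (a, b)
    rw [pairDyck_toList]
    have := three n a b 0 1 h1 ha hb hbn (by omega)
    simpa using this
  right_inv := by
    rintro ⟨q, hq⟩
    apply Subtype.ext
    apply DyckWord.ext
    show (pairDyck n (inv q.toList 0 0) (dyck_mem n q hq)).toList = q.toList
    rw [pairDyck_toList]
    have hcU : q.toList.count U = n + 1 := hq
    have hcD : q.toList.count D = n + 1 := by rw [← q.count_U_eq_count_D]; exact hq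
    have := four n q.toList (Or.inr (dyck_head? n q hq)) 0 0 (by omega) (by omega)
    simpa using this

lemma card_IInP (n : ℕ) : (IInP n).ncard = catalan (n + 1) := by
  rw [← Nat.card_coe_set_eq, Nat.card_congr (myEquiv n), Nat.card_eq_fintype_card,
    DyckWord.card_dyckWord_semilength_eq_catalan]

end Stmt11


theorem stmt11 (n : ℕ) :
    (IIn n).ncard = Nat.choose (2 * n + 2) (n + 1) / (n + 2) := by
  have h : IIn n = Stmt11.IInP n := rfl
  rw [h, Stmt11.card_IInP, catalan_eq_centralBinom_div]
  show (2 * (n + 1)).choose (n + 1) / (n + 1 + 1) = _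
  rw [show 2 * (n + 1) = 2 * n + 2 from by ring]
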